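/- For real a > 0, b > 0 with a ≠ b, the function ρ(γ) = (2/π)·γ/√((（a+b)²−γ²)(γ²−(a−b)²)) for |a−b| < γ < a+b, and 0 otherwise, is integrable on ℝ and satisfies ∫_ℝ ρ(γ) dγ = 1. -/

import Mathlib

open MeasureTheory Real Set

/-- The PDF of the eigenvalue gap for the sum of two 2×2 real symmetric matrices with gaps
`a ≠ b`. -/
noncomputable def symGapPDF (a b γ : ℝ) : ℝ :=
  if |a - b| < γ ∧ γ < a + b then
    (2 / π) * γ / Real.sqrt (((a + b) ^ 2 - γ ^ 2) * (γ ^ 2 - (a - b) ^ 2))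
  else 0

-- antiderivative
noncomputable def symGapF (c d γ : ℝ) : ℝ :=
  (1 / π) * Real.arcsin ((2 * γ ^ 2 - (c ^ 2 + d ^ 2)) / (d ^ 2 - c ^ 2))

lemma symGapF_deriv {c d γ : ℝ} (hc : 0 < c) (hcγ : c < γ) (hγd : γ < d) :
    HasDerivAt (symGapF c d)
      ((2 / π) * γ / Real.sqrt ((d ^ 2 - γ ^ 2) * (γ ^ 2 - c ^ 2))) γ := by
  have hcd : c < d := hcγ.trans hγd
  have hγ0 : 0 < γ := hc.trans hcγ
  have hd0 : 0 < d := hγ0.trans hγd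
  have hden : (0:ℝ) < d ^ 2 - c ^ 2 := by nlinarith
  have h1 : c ^ 2 < γ ^ 2 := by nlinarith
  have h2 : γ ^ 2 < d ^ 2 := by nlinarith
  set u : ℝ := (2 * γ ^ 2 - (c ^ 2 + d ^ 2)) / (d ^ 2 - c ^ 2) with hu
  have hu1 : u < 1 := by
    rw [hu, div_lt_one hden]; nlinarith
  have hu2 : -1 < u := by
    rw [hu, lt_div_iff₀ hden]; nlinarith
  have hP : (0:ℝ) < (d ^ 2 - γ ^ 2) * (γ ^ 2 - c ^ 2) := by nlinarith
  have hsqrtP : (0:ℝ) < Real.sqrt ((d ^ 2 - γ ^ 2) * (γ ^ 2 - c ^ 2)) :=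
    Real.sqrt_pos.2 hP
  have hinner : HasDerivAt (fun γ : ℝ => (2 * γ ^ 2 - (c ^ 2 + d ^ 2)) / (d ^ 2 - c ^ 2))
      (4 * γ / (d ^ 2 - c ^ 2)) γ := by
    have : HasDerivAt (fun γ : ℝ => 2 * γ ^ 2 - (c ^ 2 + d ^ 2)) (4 * γ) γ := by
      have := ((hasDerivAt_pow 2 γ).const_mul 2).sub_const (c ^ 2 + d ^ 2)
      exact this.congr_deriv (by ring)
    exact this.div_const _
  have harc := (Real.hasDerivAt_arcsin (ne_of_gt hu2) (ne_of_lt hu1)).comp γ hinner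
  have key : (1 / Real.sqrt (1 - u ^ 2)) * (4 * γ / (d ^ 2 - c ^ 2)) * (1 / π)
      = (2 / π) * γ / Real.sqrt ((d ^ 2 - γ ^ 2) * (γ ^ 2 - c ^ 2)) := by
    have h1u : 1 - u ^ 2 = (2 * Real.sqrt ((d ^ 2 - γ ^ 2) * (γ ^ 2 - c ^ 2)) / (d ^ 2 - c ^ 2)) ^ 2 := by
      rw [div_pow, div_pow, mul_pow, Real.sq_sqrt hP.le]
      field_simp
      ring
    rw [h1u, Real.sqrt_sq (by positivity)]
    field_simp
    ring
  have := ((harc.const_mul (1 / π)))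
  have heq : symGapF c d = fun γ : ℝ => (1 / π) *
      Real.arcsin ((fun γ : ℝ => (2 * γ ^ 2 - (c ^ 2 + d ^ 2)) / (d ^ 2 - c ^ 2)) γ) := rfl
  rw [heq]
  exact this.congr_deriv (by rw [← key]; ring)

/-- `symGapPDF a b` is integrable on `ℝ` and integrates to `1`. -/
theorem symGapPDF_is_density (a b : ℝ) (ha : 0 < a) (hb : 0 < b) (hab : a ≠ b) :
    Integrable (symGapPDF a b) ∧ ∫ γ : ℝ, symGapPDF a b γ = 1 := by
  set c : ℝ := |a - b| with hc_def
  set d : ℝ := a + b with hd_def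
  have hc : 0 < c := abs_pos.2 (sub_ne_zero.2 hab)
  have hcd : c < d := abs_lt.2 ⟨by linarith, by linarith⟩
  have hcsq : c ^ 2 = (a - b) ^ 2 := sq_abs _
  set g' : ℝ → ℝ := fun γ => (2 / π) * γ / Real.sqrt ((d ^ 2 - γ ^ 2) * (γ ^ 2 - c ^ 2))
    with hg'
  have hrepr : symGapPDF a b = Set.indicator (Set.Ioo c d) g' := by
    funext γ
    simp only [symGapPDF, Set.indicator, Set.mem_Ioo, hg', hcsq]
    rfl
  have hcont : ContinuousOn (symGapF c d) (Set.Icc c d) := by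
    apply Continuous.continuousOn
    exact continuous_const.mul (Real.continuous_arcsin.comp
      (((continuous_const.mul (continuous_pow 2)).sub continuous_const).div_const _))
  have hderiv : ∀ γ ∈ Set.Ioo c d, HasDerivAt (symGapF c d) (g' γ) γ :=
    fun γ hγ => symGapF_deriv hc hγ.1 hγ.2
  have hnonneg : ∀ γ ∈ Set.Ioo c d, 0 ≤ g' γ := by
    intro γ hγ
    have hγ0 : 0 ≤ γ := (hc.trans hγ.1).le
    have : (0:ℝ) ≤ 2 / π := by positivity
    positivity
  have hIoc : IntegrableOn g' (Set.Ioc c d) :=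
    intervalIntegral.integrableOn_deriv_of_nonneg hcont hderiv hnonneg
  have hInt : Integrable (symGapPDF a b) := by
    rw [hrepr, integrable_indicator_iff measurableSet_Ioo]
    exact hIoc.mono_set Set.Ioo_subset_Ioc_self
  refine ⟨hInt, ?_⟩
  have hIi : IntervalIntegrable g' volume c d :=
    (intervalIntegrable_iff_integrableOn_Ioc_of_le hcd.le).2 hIoc
  have hftc : ∫ γ in c..d, g' γ = symGapF c d d - symGapF c d c :=
    intervalIntegral.integral_eq_sub_of_hasDeriv_right_of_le hcd.le hcont
      (fun γ hγ => (hderiv γ hγ).hasDerivWithinAt) hIi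
  have hdc : (0:ℝ) < d ^ 2 - c ^ 2 := by nlinarith
  have hval : symGapF c d d - symGapF c d c = 1 := by
    unfold symGapF
    have h1 : (2 * d ^ 2 - (c ^ 2 + d ^ 2)) / (d ^ 2 - c ^ 2) = 1 := by
      rw [div_eq_one_iff_eq hdc.ne']; ring
    have h2 : (2 * c ^ 2 - (c ^ 2 + d ^ 2)) / (d ^ 2 - c ^ 2) = -1 := by
      rw [div_eq_iff hdc.ne']; ring
    rw [h1, h2, Real.arcsin_one, Real.arcsin_neg_one]
    field_simp
    norm_num
  calc ∫ γ : ℝ, symGapPDF a b γ = ∫ γ in Set.Ioo c d, g' γ := by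
        rw [hrepr, integral_indicator measurableSet_Ioo]
    _ = ∫ γ in c..d, g' γ := by
        rw [intervalIntegral.integral_of_le hcd.le, integral_Ioc_eq_integral_Ioo]
    _ = 1 := by rw [hftc, hval]
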